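/- For Schwartz functions f, g ∈ 𝒮(ℝ) with g'(x) > −1 for all x, the function x ↦ f(x + g(x)) is again a Schwartz function. -/

import Mathlib

lemma schwartz_hasTemperateGrowth (g : SchwartzMap ℝ ℝ) :
    Function.HasTemperateGrowth (g : ℝ → ℝ) := by
  refine ⟨g.smooth ⊤, fun n => ?_⟩
  obtain ⟨C, -, hC⟩ := g.decay 0 n
  exact ⟨0, C, fun x => by simpa using hC x⟩

lemma htg_add {f h : ℝ → ℝ} (hf : Function.HasTemperateGrowth f)
    (hh : Function.HasTemperateGrowth h) :
    Function.HasTemperateGrowth (fun x => f x + h x) := by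
  refine ⟨hf.1.add hh.1, fun n => ?_⟩
  obtain ⟨k₁, C₁, h₁⟩ := hf.2 n
  obtain ⟨k₂, C₂, h₂⟩ := hh.2 n
  refine ⟨max k₁ k₂, max C₁ 0 + max C₂ 0, fun x => ?_⟩
  have hd : iteratedFDeriv ℝ n (fun x => f x + h x) x
      = iteratedFDeriv ℝ n f x + iteratedFDeriv ℝ n h x :=
    iteratedFDeriv_add_apply (hf.1.contDiffAt.of_le (by exact_mod_cast le_top)) (hh.1.contDiffAt.of_le (by exact_mod_cast le_top))
  rw [hd, add_mul]
  have hb : (1 : ℝ) ≤ 1 + ‖x‖ := by simp [norm_nonneg]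
  refine (norm_add_le _ _).trans (add_le_add ?_ ?_)
  · refine (h₁ x).trans (mul_le_mul (le_max_left _ _)
      (pow_le_pow_right₀ hb (le_max_left _ _)) (by positivity) (le_max_right _ _))
  · refine (h₂ x).trans (mul_le_mul (le_max_left _ _)
      (pow_le_pow_right₀ hb (le_max_right _ _)) (by positivity) (le_max_right _ _))

/-- For Schwartz functions `f, g` with `g' > −1` everywhere, the composition
`x ↦ f(x + g(x))` is again a Schwartz function. -/
theorem schwartz_comp_shift (f g : SchwartzMap ℝ ℝ)
    (hg : ∀ x : ℝ, -1 < deriv (g : ℝ → ℝ) x) :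
    ∃ h : SchwartzMap ℝ ℝ, ∀ x : ℝ, h x = f (x + g x) := by
  have hid : Function.HasTemperateGrowth (fun x : ℝ => x) :=
    (ContinuousLinearMap.id ℝ ℝ).hasTemperateGrowth
  have hφ : Function.HasTemperateGrowth (fun x : ℝ => x + g x) :=
    htg_add hid (schwartz_hasTemperateGrowth g)
  obtain ⟨C, hCpos, hC⟩ := g.decay 0 0
  have hC0 : 0 ≤ C := hCpos.le
  have hup : ∃ (k : ℕ) (Cu : ℝ), ∀ x : ℝ, ‖x‖ ≤ Cu * (1 + ‖x + g x‖) ^ k := by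
    refine ⟨1, 1 + C, fun x => ?_⟩
    have h1 : ‖x‖ ≤ ‖x + g x‖ + ‖g x‖ := by
      calc ‖x‖ = ‖(x + g x) + (-(g x))‖ := by ring_nf
        _ ≤ ‖x + g x‖ + ‖-(g x)‖ := norm_add_le _ _
        _ = ‖x + g x‖ + ‖g x‖ := by rw [norm_neg]
    have h2 : ‖g x‖ ≤ C := by simpa using hC x
    have h3 : 0 ≤ ‖x + g x‖ := norm_nonneg _
    nlinarith
  refine ⟨SchwartzMap.compCLM ℝ hφ hup f, fun x => rfl⟩
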